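/- Let L, M ≥ 0 be integers, η ∈ ℂ∖{0}, ξ₊, ξ₋ ∈ ℂ, set s := (ξ₊+ξ₋)/η, and assume neither s nor s + L − M is a nonpositive integer. Let x_1,…,x_L, z_1,…,z_M ∈ ℂ be nonzero with x_1²,…,x_L² pairwise distinct, z_1²,…,z_M² pairwise distinct, and (x_i ± η/2)² ≠ z_k² and (z_k ± η/2)² ≠ x_i² for all i,k. Then A_{{x}}[f_{ξ₊,ξ₋,{z}}] = (−1)^M · (2η)^{L−M} · (Γ(s+L−M)/Γ(s)) · A_{{z}}[f_{−ξ₊+η/2, −ξ₋+η/2, {x}}], where Γ is the complex Gamma function and (2η)^{L−M} is the integer power (possibly negative). -/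

import Mathlib

open Finset

/-- `A_{{u}}[f]` as a ratio of determinants. -/
noncomputable def Afun {K : ℕ} (η : ℂ) (u : Fin K → ℂ) (f : ℂ → ℂ) : ℂ :=
  Matrix.det (Matrix.of fun i j : Fin K =>
      f (u i) * (u i + η / 2) ^ (2 * (j : ℕ)) + f (-u i) * (u i - η / 2) ^ (2 * (j : ℕ)))
    / Matrix.det (Matrix.of fun i j : Fin K => u i ^ (2 * (j : ℕ)))

/-- `f_{ξ₊,ξ₋,{v}}(λ) = ((λ+ξ₊)(λ+ξ₋)/λ) ∏_m (λ²−v_m²)/((λ+η/2)²−v_m²)`. -/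
noncomputable def fFun (η ξp ξm : ℂ) {M : ℕ} (v : Fin M → ℂ) (lam : ℂ) : ℂ :=
  ((lam + ξp) * (lam + ξm) / lam) *
    ∏ m, ((lam ^ 2 - v m ^ 2) / ((lam + η / 2) ^ 2 - v m ^ 2))

namespace S14


/-- signed value: `wv u ε i = ±u i`. -/
def wv {K : ℕ} (u : Fin K → ℂ) (ε : Fin K → Bool) (i : Fin K) : ℂ :=
  if ε i then u i else -u i

/-- The symmetrized sum form of the A-functional. -/
noncomputable def AS {K : ℕ} (η : ℂ) (u : Fin K → ℂ) (f : ℂ → ℂ) : ℂ :=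
  ∑ ε : Fin K → Bool, (∏ i, f (wv u ε i)) *
    ∏ i, ∏ j ∈ Ioi i, (wv u ε i + wv u ε j + η) / (wv u ε i + wv u ε j)

lemma wv_sq {K : ℕ} (u : Fin K → ℂ) (ε : Fin K → Bool) (i : Fin K) :
    (wv u ε i) ^ 2 = u i ^ 2 := by
  unfold wv; split <;> ring

lemma det_num {K : ℕ} (η : ℂ) (u : Fin K → ℂ) (f : ℂ → ℂ) :
    Matrix.det (Matrix.of fun i j : Fin K =>
      f (u i) * (u i + η / 2) ^ (2 * (j : ℕ)) + f (-u i) * (u i - η / 2) ^ (2 * (j : ℕ)))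
    = ∑ ε : Fin K → Bool, (∏ i, f (wv u ε i)) *
        Matrix.det (Matrix.vandermonde (fun i => (wv u ε i + η / 2) ^ 2)) := by
  classical
  set D := (Matrix.detRowAlternating (R := ℂ) (n := Fin K)).toMultilinearMap with hD
  set g : (i : Fin K) → Bool → (Fin K → ℂ) := fun i b =>
    f (wv u (fun _ => b) i) • (fun j : Fin K => (((wv u (fun _ => b) i + η / 2) ^ 2) ^ (j : ℕ) : ℂ))
    with hg
  have h2 : ∀ i : Fin K, (-u i + η/2)^2 = (u i - η/2)^2 := fun i => by ring
  have h1 : (Matrix.of fun i j : Fin K =>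
      f (u i) * (u i + η / 2) ^ (2 * (j : ℕ)) + f (-u i) * (u i - η / 2) ^ (2 * (j : ℕ)))
      = fun i => ∑ b : Bool, g i b := by
    funext i j
    simp [hg, wv, Fintype.sum_bool, ← pow_mul, h2 i]
    exact Or.inl (by rw [pow_mul, pow_mul, h2 i])
  have key : Matrix.det (Matrix.of fun i j : Fin K =>
      f (u i) * (u i + η / 2) ^ (2 * (j : ℕ)) + f (-u i) * (u i - η / 2) ^ (2 * (j : ℕ)))
      = D (fun i => ∑ b : Bool, g i b) := by rw [h1]; rfl
  rw [key, D.map_sum]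
  refine Finset.sum_congr rfl fun ε _ => ?_
  have h3 : (fun i => g i (ε i)) = fun i => f (wv u ε i) •
      (fun j : Fin K => (((wv u ε i + η / 2) ^ 2) ^ (j : ℕ) : ℂ)) := by
    funext i
    simp only [hg, wv]
  rw [h3, D.map_smul_univ, smul_eq_mul]
  rfl

lemma det_den {K : ℕ} (u : Fin K → ℂ) :
    Matrix.det (Matrix.of fun i j : Fin K => u i ^ (2 * (j : ℕ)))
    = ∏ i, ∏ j ∈ Ioi i, (u j ^ 2 - u i ^ 2) := by
  rw [← Matrix.det_vandermonde]
  congr 1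
  funext i j
  simp [Matrix.vandermonde, pow_mul]


lemma Afun_eq_AS {K : ℕ} (η : ℂ) (u : Fin K → ℂ)
    (hu : ∀ i j, i ≠ j → u i ^ 2 ≠ u j ^ 2) (f : ℂ → ℂ) :
    Afun η u f = AS η u f := by
  have hw : ∀ (ε : Fin K → Bool) (i j : Fin K), i ≠ j → wv u ε i + wv u ε j ≠ 0 := by
    intro ε i j hij h
    apply hu i j hij
    rw [← wv_sq u ε i, ← wv_sq u ε j]
    have : wv u ε i = - wv u ε j := by linear_combination h
    rw [this]; ring
  have hden : (∏ i, ∏ j ∈ Ioi i, (u j ^ 2 - u i ^ 2)) ≠ 0 := by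
    rw [Finset.prod_ne_zero_iff]
    intro i _
    rw [Finset.prod_ne_zero_iff]
    intro j hj
    exact sub_ne_zero.mpr (hu j i (ne_of_gt (Finset.mem_Ioi.mp hj)))
  unfold Afun AS
  rw [det_num, det_den, Finset.sum_div]
  refine Finset.sum_congr rfl fun ε _ => ?_
  rw [Matrix.det_vandermonde]
  have pair : ∀ i j : Fin K, i ≠ j →
      ((wv u ε j + η/2)^2 - (wv u ε i + η/2)^2)
      = (u j ^ 2 - u i ^ 2) * ((wv u ε i + wv u ε j + η)/(wv u ε i + wv u ε j)) := by
    intro i j hij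
    have h0 := hw ε i j hij
    rw [← wv_sq u ε i, ← wv_sq u ε j]
    field_simp
    ring
  have hsplit : (∏ i, ∏ j ∈ Ioi i, ((wv u ε j + η/2)^2 - (wv u ε i + η/2)^2))
      = (∏ i, ∏ j ∈ Ioi i, (u j ^ 2 - u i ^ 2)) *
        ∏ i, ∏ j ∈ Ioi i, ((wv u ε i + wv u ε j + η)/(wv u ε i + wv u ε j)) := by
    rw [← Finset.prod_mul_distrib]
    refine Finset.prod_congr rfl fun i _ => ?_
    rw [← Finset.prod_mul_distrib]
    refine Finset.prod_congr rfl fun j hj => ?_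
    exact pair i j (ne_of_lt (Finset.mem_Ioi.mp hj))
  rw [hsplit, show ((∏ i, f (wv u ε i)) * ((∏ i, ∏ j ∈ Ioi i, (u j ^ 2 - u i ^ 2)) *
        ∏ i, ∏ j ∈ Ioi i, ((wv u ε i + wv u ε j + η)/(wv u ε i + wv u ε j))))
      = ((∏ i, ∏ j ∈ Ioi i, (u j ^ 2 - u i ^ 2)) * ((∏ i, f (wv u ε i)) *
        ∏ i, ∏ j ∈ Ioi i, ((wv u ε i + wv u ε j + η)/(wv u ε i + wv u ε j)))) from by ring,
    mul_div_cancel_left₀ _ hden]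



lemma prod_ite_succAbove_gt {n : ℕ} (p : Fin (n+1)) (A : Fin (n+1) → ℂ) :
    (∏ k : Fin n, (if p < p.succAbove k then A (p.succAbove k) else 1)) = ∏ j ∈ Ioi p, A j := by
  rw [← Finset.prod_filter]
  refine Finset.prod_bij (fun k _ => p.succAbove k) ?_ ?_ ?_ ?_
  · intro k hk
    simp only [Finset.mem_filter, Finset.mem_univ, true_and] at hk
    exact Finset.mem_Ioi.mpr hk
  · intro a ha b hb h
    exact Fin.succAbove_right_injective h
  · intro j hj
    have hjp : j ≠ p := ne_of_gt (Finset.mem_Ioi.mp hj)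
    obtain ⟨k, hk⟩ := Fin.exists_succAbove_eq hjp
    refine ⟨k, ?_, hk⟩
    simp only [Finset.mem_filter, Finset.mem_univ, true_and, hk]
    exact Finset.mem_Ioi.mp hj
  · intro k hk; rfl

lemma prod_ite_succAbove_lt {n : ℕ} (p : Fin (n+1)) (A : Fin (n+1) → ℂ) :
    (∏ k : Fin n, (if p.succAbove k < p then A (p.succAbove k) else 1)) = ∏ j ∈ Iio p, A j := by
  rw [← Finset.prod_filter]
  refine Finset.prod_bij (fun k _ => p.succAbove k) ?_ ?_ ?_ ?_
  · intro k hk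
    simp only [Finset.mem_filter, Finset.mem_univ, true_and] at hk
    exact Finset.mem_Iio.mpr hk
  · intro a ha b hb h
    exact Fin.succAbove_right_injective h
  · intro j hj
    have hjp : j ≠ p := ne_of_lt (Finset.mem_Iio.mp hj)
    obtain ⟨k, hk⟩ := Fin.exists_succAbove_eq hjp
    refine ⟨k, ?_, hk⟩
    simp only [Finset.mem_filter, Finset.mem_univ, true_and, hk]
    exact Finset.mem_Iio.mp hj
  · intro k hk; rfl

lemma Ioi_succAbove {n : ℕ} (p : Fin (n+1)) (k : Fin n) (F : Fin (n+1) → ℂ) :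
    (∏ j ∈ Ioi (p.succAbove k), F j)
      = (if p.succAbove k < p then F p else 1) * ∏ j ∈ Ioi k, F (p.succAbove j) := by
  have hmap : Ioi (p.succAbove k)
      = (if p.succAbove k < p then {p} else ∅) ∪ (Ioi k).map ⟨p.succAbove, Fin.succAbove_right_injective⟩ := by
    ext j
    simp only [Finset.mem_Ioi, Finset.mem_union, Finset.mem_map, Function.Embedding.coeFn_mk]
    constructor
    · intro hj
      by_cases hjp : j = p
      · subst hjp
        simp [hj]
      · obtain ⟨k', hk'⟩ := Fin.exists_succAbove_eq hjp
        right
        exact ⟨k', by rw [← Fin.succAbove_lt_succAbove_iff (p := p), hk']; exact hj, hk'⟩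
    · intro hj
      rcases hj with hj | ⟨k', hk', rfl⟩
      · split at hj
        · simp only [Finset.mem_singleton] at hj
          subst hj; assumption
        · simp at hj
      · exact (Fin.succAbove_lt_succAbove_iff (p := p)).mpr hk'
  rw [hmap, Finset.prod_union, Finset.prod_map]
  · congr 1
    split
    · simp
    · simp
  · split
    · rw [Finset.disjoint_singleton_left]
      simp only [Finset.mem_map, Function.Embedding.coeFn_mk, not_exists]
      intro a
      exact fun h => Fin.succAbove_ne p a h.2
    · exact Finset.disjoint_empty_left _

lemma prod_pairs_split {n : ℕ} (p : Fin (n+1)) (F : Fin (n+1) → Fin (n+1) → ℂ)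
    (hsym : ∀ a b, F a b = F b a) :
    (∏ i, ∏ j ∈ Ioi i, F i j)
      = (∏ k : Fin n, F p (p.succAbove k)) *
        ∏ i : Fin n, ∏ j ∈ Ioi i, F (p.succAbove i) (p.succAbove j) := by
  rw [Fin.prod_univ_succAbove (fun i => ∏ j ∈ Ioi i, F i j) p]
  have h1 : ∀ k : Fin n, (∏ j ∈ Ioi (p.succAbove k), F (p.succAbove k) j)
      = (if p.succAbove k < p then F (p.succAbove k) p else 1) *
        ∏ j ∈ Ioi k, F (p.succAbove k) (p.succAbove j) := by
    intro k
    exact Ioi_succAbove p k (F (p.succAbove k))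
  calc (∏ j ∈ Ioi p, F p j) * ∏ k : Fin n, ∏ j ∈ Ioi (p.succAbove k), F (p.succAbove k) j
      = (∏ j ∈ Ioi p, F p j) * ∏ k : Fin n,
          ((if p.succAbove k < p then F (p.succAbove k) p else 1) *
            ∏ j ∈ Ioi k, F (p.succAbove k) (p.succAbove j)) := by
        rw [Finset.prod_congr rfl fun k _ => h1 k]
    _ = ((∏ j ∈ Ioi p, F p j) * ∏ k : Fin n, (if p.succAbove k < p then F (p.succAbove k) p else 1)) *
          ∏ i : Fin n, ∏ j ∈ Ioi i, F (p.succAbove i) (p.succAbove j) := by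
        rw [Finset.prod_mul_distrib]; ring
    _ = (∏ k : Fin n, F p (p.succAbove k)) *
          ∏ i : Fin n, ∏ j ∈ Ioi i, F (p.succAbove i) (p.succAbove j) := by
        congr 1
        have h2 : (∏ k : Fin n, (if p.succAbove k < p then F (p.succAbove k) p else 1))
            = ∏ j ∈ Iio p, F p j := by
          rw [show (fun k : Fin n => (if p.succAbove k < p then F (p.succAbove k) p else 1))
            = fun k : Fin n => (if p.succAbove k < p then F p (p.succAbove k) else 1) from
              funext fun k => by rw [hsym], prod_ite_succAbove_lt p (F p)]
        rw [h2]
        have h3 : (∏ k : Fin n, F p (p.succAbove k))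
            = (∏ k : Fin n, (if p.succAbove k < p then F p (p.succAbove k) else 1)) *
              (∏ k : Fin n, (if p < p.succAbove k then F p (p.succAbove k) else 1)) := by
          rw [← Finset.prod_mul_distrib]
          refine Finset.prod_congr rfl fun k _ => ?_
          rcases lt_or_gt_of_ne (Fin.succAbove_ne p k) with h | h
          · rw [if_pos h, if_neg (by exact not_lt_of_gt h), mul_one]
          · rw [if_neg (by exact not_lt_of_gt h), if_pos h, one_mul]
        rw [h3, prod_ite_succAbove_lt p (F p), prod_ite_succAbove_gt p (F p)]
        ring

/-- value of `fFun` at the "surviving" slot. -/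
lemma fFun_at_neg (η ξm a : ℂ) {M : ℕ} (z : Fin M → ℂ) (ha0 : a ≠ 0) :
    fFun η (-a) ξm z (-a)
      = 2 * (ξm - a) * ∏ m, ((a ^ 2 - z m ^ 2) / ((a - η/2) ^ 2 - z m ^ 2)) := by
  unfold fFun
  have h1 : ∀ m : Fin M, ((-a) ^ 2 - z m ^ 2) / ((-a + η / 2) ^ 2 - z m ^ 2)
      = (a ^ 2 - z m ^ 2) / ((a - η/2) ^ 2 - z m ^ 2) := by
    intro m
    congr 2 <;> ring
  rw [Finset.prod_congr rfl fun m _ => h1 m]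
  congr 1
  rw [div_eq_iff (neg_ne_zero.mpr ha0)]
  ring

/-- the per-slot combination: `f_{-a}(w) * (w - a + η)/(w - a) = f_{η-a}(w)`. -/
lemma slot_combine (η ξm a w : ℂ) {M : ℕ} (z : Fin M → ℂ) (hwa : w + -a ≠ 0) :
    fFun η (-a) ξm z w * ((-a + w + η) / (-a + w)) = fFun η (η - a) ξm z w := by
  unfold fFun
  set P := ∏ m : Fin M, ((w ^ 2 - z m ^ 2) / ((w + η / 2) ^ 2 - z m ^ 2)) with hP
  have hwa2 : -a + w ≠ 0 := by rwa [add_comm] at hwa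
  rcases eq_or_ne w 0 with hw | hw
  · subst hw; simp
  · field_simp
    ring


lemma wv_insert_same {n : ℕ} (x : Fin (n+1) → ℂ) (i₀ : Fin (n+1)) (b : Bool) (ε' : Fin n → Bool) :
    wv x (i₀.insertNth b ε') i₀ = if b then x i₀ else -x i₀ := by
  unfold wv
  rw [Fin.insertNth_apply_same]

lemma wv_insert_succAbove {n : ℕ} (x : Fin (n+1) → ℂ) (i₀ : Fin (n+1)) (b : Bool)
    (ε' : Fin n → Bool) (j : Fin n) :
    wv x (i₀.insertNth b ε') (i₀.succAbove j) = wv (x ∘ i₀.succAbove) ε' j := by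
  unfold wv
  rw [Fin.insertNth_apply_succAbove]
  rfl

lemma fFun_at_pos (η ξm a : ℂ) {M : ℕ} (z : Fin M → ℂ) :
    fFun η (-a) ξm z a = 0 := by
  unfold fFun
  simp

lemma key {n M : ℕ} (η ξm : ℂ) (z : Fin M → ℂ) (x : Fin (n+1) → ℂ) (i₀ : Fin (n+1)) (a : ℂ)
    (ha : a ^ 2 = x i₀ ^ 2) (ha0 : a ≠ 0)
    (hx : ∀ j, j ≠ i₀ → x j ^ 2 ≠ x i₀ ^ 2) :
    AS η x (fFun η (-a) ξm z)
      = (2 * (ξm - a) * ∏ m, ((x i₀ ^ 2 - z m ^ 2) / ((a - η/2) ^ 2 - z m ^ 2)))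
        * AS η (x ∘ i₀.succAbove) (fFun η (η - a) ξm z) := by
  classical
  have hsgn : a = x i₀ ∨ a = -x i₀ := by
    have h : (a - x i₀) * (a + x i₀) = 0 := by linear_combination ha
    rcases mul_eq_zero.mp h with h | h
    · exact Or.inl (by linear_combination h)
    · exact Or.inr (by linear_combination h)
  obtain ⟨gb, hgood, hbad⟩ : ∃ gb : Bool,
      (if gb then x i₀ else -x i₀) = -a ∧ (if !gb then x i₀ else -x i₀) = a := by
    rcases hsgn with h | h
    · exact ⟨false, by simp [h], by simp [h]⟩
    · exact ⟨true, by simp [h], by simp [h]⟩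
  set T : (Fin (n+1) → Bool) → ℂ := fun ε => (∏ i, fFun η (-a) ξm z (wv x ε i)) *
    ∏ i, ∏ j ∈ Ioi i, (wv x ε i + wv x ε j + η) / (wv x ε i + wv x ε j) with hT
  have hTa : ∀ ε : Fin (n+1) → Bool, T ε = (∏ i, fFun η (-a) ξm z (wv x ε i)) *
    ∏ i, ∏ j ∈ Ioi i, (wv x ε i + wv x ε j + η) / (wv x ε i + wv x ε j) := fun ε => rfl
  have hsum : AS η x (fFun η (-a) ξm z) = ∑ q : Bool × (Fin n → Bool), T (i₀.insertNth q.1 q.2) := by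
    rw [show (∑ q : Bool × (Fin n → Bool), T (i₀.insertNth q.1 q.2))
        = ∑ q : Bool × (Fin n → Bool), T ((Fin.insertNthEquiv (fun _ => Bool) i₀) q) from
      Finset.sum_congr rfl fun q _ => rfl,
      Equiv.sum_comp (Fin.insertNthEquiv (fun _ => Bool) i₀) T]
    rfl
  rw [hsum, Fintype.sum_prod_type]
  have hb2 : ∀ F : Bool → ℂ, (∑ b, F b) = F gb + F (!gb) := by
    intro F; cases gb <;> simp [Fintype.sum_bool] <;> ring
  rw [hb2 (fun b => ∑ ε' : Fin n → Bool, T (i₀.insertNth b ε'))]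
  have hzero : (∑ ε' : Fin n → Bool, T (i₀.insertNth (!gb) ε')) = 0 := by
    refine Finset.sum_eq_zero fun ε' _ => ?_
    rw [hTa]
    have h0 : fFun η (-a) ξm z (wv x (i₀.insertNth (!gb) ε') i₀) = 0 := by
      rw [wv_insert_same, hbad, fFun_at_pos]
    rw [Finset.prod_eq_zero (Finset.mem_univ i₀) h0, zero_mul]
  rw [hzero, add_zero]
  have hterm : ∀ ε' : Fin n → Bool, T (i₀.insertNth gb ε')
      = (2 * (ξm - a) * ∏ m, ((x i₀ ^ 2 - z m ^ 2) / ((a - η/2) ^ 2 - z m ^ 2)))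
        * ((∏ j, fFun η (η - a) ξm z (wv (x ∘ i₀.succAbove) ε' j)) *
           ∏ i, ∏ j ∈ Ioi i, (wv (x ∘ i₀.succAbove) ε' i + wv (x ∘ i₀.succAbove) ε' j + η) /
             (wv (x ∘ i₀.succAbove) ε' i + wv (x ∘ i₀.succAbove) ε' j)) := by
    intro ε'
    set ε : Fin (n+1) → Bool := i₀.insertNth gb ε' with hε
    set w' : Fin n → ℂ := wv (x ∘ i₀.succAbove) ε' with hw'
    have hwi₀ : wv x ε i₀ = -a := by rw [hε, wv_insert_same, hgood]
    have hwsA : ∀ j : Fin n, wv x ε (i₀.succAbove j) = w' j := fun j => wv_insert_succAbove x i₀ gb ε' j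
    have hwa : ∀ j : Fin n, w' j + -a ≠ 0 := by
      intro j h
      apply hx (i₀.succAbove j) (Fin.succAbove_ne i₀ j)
      have hja : w' j = a := by linear_combination h
      calc x (i₀.succAbove j) ^ 2 = (w' j) ^ 2 := by
            rw [hw', wv_sq]; rfl
        _ = x i₀ ^ 2 := by rw [hja, ha]
    rw [hTa]
    -- split the f-product
    rw [Fin.prod_univ_succAbove (fun i => fFun η (-a) ξm z (wv x ε i)) i₀]
    -- split the cross-product
    rw [prod_pairs_split i₀ (fun i j => (wv x ε i + wv x ε j + η) / (wv x ε i + wv x ε j))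
      (fun i j => by
        show (wv x ε i + wv x ε j + η) / (wv x ε i + wv x ε j)
          = (wv x ε j + wv x ε i + η) / (wv x ε j + wv x ε i)
        rw [add_comm (wv x ε i) (wv x ε j)])]
    rw [hwi₀]
    have e1 : (∏ j : Fin n, fFun η (-a) ξm z (wv x ε (i₀.succAbove j)))
        = ∏ j : Fin n, fFun η (-a) ξm z (w' j) :=
      Finset.prod_congr rfl fun j _ => by rw [hwsA j]
    have e2 : (∏ k : Fin n, (-a + wv x ε (i₀.succAbove k) + η) / (-a + wv x ε (i₀.succAbove k)))
        = ∏ k : Fin n, (-a + w' k + η) / (-a + w' k) :=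
      Finset.prod_congr rfl fun k _ => by rw [hwsA k]
    rw [e1, e2]
    have hcross : ∀ i : Fin n, ∀ j ∈ Ioi i,
        (wv x ε (i₀.succAbove i) + wv x ε (i₀.succAbove j) + η) /
          (wv x ε (i₀.succAbove i) + wv x ε (i₀.succAbove j))
        = (w' i + w' j + η) / (w' i + w' j) := by
      intro i j _
      rw [hwsA i, hwsA j]
    rw [Finset.prod_congr rfl fun i _ => Finset.prod_congr rfl (hcross i)]
    -- now combine
    rw [fFun_at_neg η ξm a z ha0, ha]
    have e3 : (∏ j, fFun η (-a) ξm z (w' j)) * (∏ k : Fin n, (-a + w' k + η) / (-a + w' k))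
        = ∏ j, fFun η (η - a) ξm z (w' j) := by
      rw [← Finset.prod_mul_distrib]
      exact Finset.prod_congr rfl fun j _ => slot_combine η ξm a (w' j) z (hwa j)
    rw [← e3]
    ring
  rw [Finset.sum_congr rfl fun ε' _ => hterm ε', ← Finset.mul_sum]
  rfl

/-- multiplying `f` by a factor that is even on the `±u i` only multiplies `AS` by constants. -/
lemma AS_mul_even {K : ℕ} (η : ℂ) (u : Fin K → ℂ) (f1 f2 : ℂ → ℂ) (c : Fin K → ℂ)
    (h : ∀ i, f1 (u i) = f2 (u i) * c i ∧ f1 (-u i) = f2 (-u i) * c i) :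
    AS η u f1 = (∏ i, c i) * AS η u f2 := by
  unfold AS
  rw [Finset.mul_sum]
  refine Finset.sum_congr rfl fun ε _ => ?_
  have h1 : (∏ i, f1 (wv u ε i)) = (∏ i, c i) * ∏ i, f2 (wv u ε i) := by
    rw [← Finset.prod_mul_distrib]
    refine Finset.prod_congr rfl fun i _ => ?_
    unfold wv
    rcases Bool.eq_false_or_eq_true (ε i) with hb | hb <;>
      simp only [hb, if_true, Bool.false_eq_true, if_false]
    · rw [(h i).1]; ring
    · rw [(h i).2]; ring
  rw [h1]
  ring

/-- `AS` over zero variables equals `1`. -/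
lemma AS_zero (η : ℂ) (u : Fin 0 → ℂ) (f : ℂ → ℂ) : AS η u f = 1 := by
  unfold AS
  simp

/-- Pochhammer product `∏_{j<d} (s+j)`. -/
noncomputable def poch (s : ℂ) (d : ℕ) : ℂ := ∏ j ∈ Finset.range d, (s + (j : ℂ))

lemma poch_zero (s : ℂ) : poch s 0 = 1 := by simp [poch]

lemma poch_succ (s : ℂ) (d : ℕ) : poch s (d + 1) = s * poch (s + 1) d := by
  unfold poch
  rw [Finset.prod_range_succ']
  have : ∀ j : ℕ, (s + ((j:ℕ) + 1 : ℕ)) = (s + 1) + (j : ℂ) := by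
    intro j; push_cast; ring
  rw [Finset.prod_congr rfl fun j _ => this j]
  simp [mul_comm]

open Polynomial in
/-- `t ↦ AS η x (fFun η t ξm z)` is a polynomial of degree ≤ L. -/
lemma exists_polyP {L M : ℕ} (η ξm : ℂ) (x : Fin L → ℂ) (z : Fin M → ℂ) :
    ∃ P : Polynomial ℂ, P.natDegree ≤ L ∧ ∀ t, P.eval t = AS η x (fFun η t ξm z) := by
  classical
  set gpart : ℂ → ℂ := fun w => (w + ξm)/w * ∏ m, ((w^2 - z m ^2)/((w + η/2)^2 - z m ^2)) with hgp
  set B : (Fin L → Bool) → ℂ := fun ε => (∏ i, gpart (wv x ε i)) *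
    ∏ i, ∏ j ∈ Ioi i, (wv x ε i + wv x ε j + η) / (wv x ε i + wv x ε j) with hB
  refine ⟨∑ ε : Fin L → Bool, C (B ε) * ∏ i, (X + C (wv x ε i)), ?_, ?_⟩
  · refine Polynomial.natDegree_sum_le_of_forall_le _ _ fun ε _ => ?_
    refine le_trans (Polynomial.natDegree_C_mul_le _ _) ?_
    refine le_trans (Polynomial.natDegree_prod_le _ _) ?_
    refine le_trans (Finset.sum_le_card_nsmul _ _ 1 fun i _ => ?_) (by simp)
    exact le_of_eq (Polynomial.natDegree_X_add_C _)
  · intro t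
    rw [Polynomial.eval_finset_sum]
    unfold AS
    refine Finset.sum_congr rfl fun ε _ => ?_
    rw [Polynomial.eval_mul, Polynomial.eval_C, Polynomial.eval_prod]
    have h1 : ∀ i : Fin L, Polynomial.eval t (X + C (wv x ε i)) = t + wv x ε i := by
      intro i; simp
    rw [Finset.prod_congr rfl fun i _ => h1 i]
    have h2 : (∏ i, fFun η t ξm z (wv x ε i))
        = (∏ i, (t + wv x ε i)) * ∏ i, gpart (wv x ε i) := by
      rw [← Finset.prod_mul_distrib]
      refine Finset.prod_congr rfl fun i _ => ?_
      unfold fFun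
      rw [hgp]
      ring
    rw [h2, hB]
    ring

open Polynomial in
/-- the right side is (const × Pochhammer × AS) and is a polynomial of degree ≤ d + M. -/
lemma exists_polyQ {L M : ℕ} (η ξm : ℂ) (x : Fin L → ℂ) (z : Fin M → ℂ) (d : ℕ) (cst : ℂ) :
    ∃ Q : Polynomial ℂ, Q.natDegree ≤ d + M ∧ ∀ t,
      Q.eval t = cst * poch ((t + ξm)/η) d * AS η z (fFun η (η/2 - t) (η/2 - ξm) x) := by
  classical
  set hpart : ℂ → ℂ := fun w => (w + (η/2 - ξm))/w *
    ∏ i, ((w^2 - x i ^2)/((w + η/2)^2 - x i ^2)) with hhp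
  set D : (Fin M → Bool) → ℂ := fun τ => (∏ k, hpart (wv z τ k)) *
    ∏ k, ∏ l ∈ Ioi k, (wv z τ k + wv z τ l + η) / (wv z τ k + wv z τ l) with hD
  refine ⟨C cst * (∏ j ∈ Finset.range d, (C η⁻¹ * X + C (ξm/η + (j:ℂ)))) *
    ∑ τ : Fin M → Bool, C (D τ) * ∏ k, (C (wv z τ k + η/2) - X), ?_, ?_⟩
  · refine le_trans (Polynomial.natDegree_mul_le) ?_
    have hA : (C cst * (∏ j ∈ Finset.range d, (C η⁻¹ * X + C (ξm/η + (j:ℂ))))).natDegree ≤ d := by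
      refine le_trans (Polynomial.natDegree_C_mul_le _ _) ?_
      refine le_trans (Polynomial.natDegree_prod_le _ _) ?_
      refine le_trans (Finset.sum_le_card_nsmul _ _ 1 fun j _ => ?_) (by simp)
      refine le_trans (Polynomial.natDegree_add_le _ _) ?_
      simp [Polynomial.natDegree_C_mul_le]
      exact le_trans (Polynomial.natDegree_C_mul_le _ _) (by simp)
    have hBd : (∑ τ : Fin M → Bool, C (D τ) * ∏ k, (C (wv z τ k + η/2) - X)).natDegree ≤ M := by
      refine Polynomial.natDegree_sum_le_of_forall_le _ _ fun τ _ => ?_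
      refine le_trans (Polynomial.natDegree_C_mul_le _ _) ?_
      refine le_trans (Polynomial.natDegree_prod_le _ _) ?_
      refine le_trans (Finset.sum_le_card_nsmul _ _ 1 fun k _ => ?_) (by simp)
      refine le_trans (Polynomial.natDegree_sub_le _ _) (by simp)
    omega
  · intro t
    rw [Polynomial.eval_mul, Polynomial.eval_mul, Polynomial.eval_C, Polynomial.eval_prod,
      Polynomial.eval_finset_sum]
    have h1 : (∏ j ∈ Finset.range d, Polynomial.eval t (C η⁻¹ * X + C (ξm/η + (j:ℂ))))
        = poch ((t + ξm)/η) d := by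
      unfold poch
      refine Finset.prod_congr rfl fun j _ => ?_
      simp only [Polynomial.eval_add, Polynomial.eval_mul, Polynomial.eval_C, Polynomial.eval_X]
      ring
    rw [h1]
    unfold AS
    rw [Finset.mul_sum, Finset.mul_sum]
    refine Finset.sum_congr rfl fun τ _ => ?_
    rw [Polynomial.eval_mul, Polynomial.eval_C, Polynomial.eval_prod]
    have h2 : ∀ k : Fin M, Polynomial.eval t (C (wv z τ k + η/2) - X) = wv z τ k + η/2 - t := by
      intro k; simp
    rw [Finset.prod_congr rfl fun k _ => h2 k]
    have h3 : (∏ k, fFun η (η/2 - t) (η/2 - ξm) x (wv z τ k))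
        = (∏ k, (wv z τ k + η/2 - t)) * ∏ k, hpart (wv z τ k) := by
      rw [← Finset.prod_mul_distrib]
      refine Finset.prod_congr rfl fun k _ => ?_
      unfold fFun
      rw [hhp]
      ring
    rw [h3, hD]
    ring

lemma fFun_shift_pt {n M : ℕ} (η ξm a v : ℂ) (x : Fin (n+1) → ℂ) (z : Fin M → ℂ)
    (i₀ : Fin (n+1)) (ha : a^2 = x i₀^2)
    (hv0 : v ≠ 0) (hvx : ∀ j, (v + η/2)^2 ≠ x j ^2) (hva : v^2 ≠ (a - η/2)^2) :
    fFun η (η/2 + a) (η/2 - ξm) x v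
      = fFun η (a - η/2) (η/2 - ξm) (x ∘ i₀.succAbove) v
        * ((v^2 - x i₀^2)/(v^2 - (a-η/2)^2)) := by
  unfold fFun
  rw [Fin.prod_univ_succAbove (fun j => (v^2 - x j^2)/((v+η/2)^2 - x j^2)) i₀]
  simp only [Function.comp_apply]
  have h1 : (v + η/2)^2 - a^2 ≠ 0 := by rw [ha]; exact sub_ne_zero.mpr (hvx i₀)
  have h2 : v^2 - (a - η/2)^2 ≠ 0 := sub_ne_zero.mpr hva
  rw [← ha]
  set R := ∏ j : Fin n, ((v^2 - x (i₀.succAbove j)^2)/((v+η/2)^2 - x (i₀.succAbove j)^2)) with hR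
  have E : (v^2 - a^2)/((v + η/2)^2 - a^2) * (v + η/2 + a)
      = (v^2 - a^2)/(v^2 - (a - η/2)^2) * (v + a - η/2) := by
    rw [div_mul_eq_mul_div, div_mul_eq_mul_div, div_eq_div_iff h1 h2]
    ring
  linear_combination ((v + (η/2 - ξm))/v * R) * E

lemma even_shift {n M : ℕ} (η ξm a : ℂ) (x : Fin (n+1) → ℂ) (z : Fin M → ℂ) (i₀ : Fin (n+1))
    (ha : a^2 = x i₀^2) (hz0 : ∀ k, z k ≠ 0)
    (hzx : ∀ k j, (z k + η/2)^2 ≠ x j^2 ∧ (z k - η/2)^2 ≠ x j^2)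
    (hza : ∀ k, z k ^ 2 ≠ (a - η/2)^2) :
    AS η z (fFun η (η/2 + a) (η/2 - ξm) x)
      = (∏ k, ((z k^2 - x i₀^2)/(z k^2 - (a - η/2)^2))) *
        AS η z (fFun η (a - η/2) (η/2 - ξm) (x ∘ i₀.succAbove)) := by
  apply AS_mul_even
  intro k
  constructor
  · have := fFun_shift_pt η ξm a (z k) x z i₀ ha (hz0 k) (fun j => (hzx k j).1) (hza k)
    simpa using this
  · have hneg : ∀ j, (-z k + η/2)^2 ≠ x j ^ 2 := by
      intro j
      have h : (-z k + η/2)^2 = (z k - η/2)^2 := by ring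
      rw [h]; exact (hzx k j).2
    have hva : (-z k)^2 ≠ (a - η/2)^2 := by rw [neg_sq]; exact hza k
    have := fFun_shift_pt η ξm a (-z k) x z i₀ ha (neg_ne_zero.mpr (hz0 k)) hneg hva
    rw [this, neg_sq]

lemma poch_one (s : ℂ) : poch s 1 = s := by simp [poch]

lemma master (N : ℕ) : ∀ (L M : ℕ), L + M ≤ N → M ≤ L →
    ∀ (η : ℂ), η ≠ 0 → ∀ (ξp ξm : ℂ) (x : Fin L → ℂ) (z : Fin M → ℂ),
    (∀ i, x i ≠ 0) → (∀ k, z k ≠ 0) →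
    (∀ i j, i ≠ j → x i ^ 2 ≠ x j ^ 2) → (∀ i j, i ≠ j → z i ^ 2 ≠ z j ^ 2) →
    (∀ i k, (x i + η/2)^2 ≠ z k ^2 ∧ (x i - η/2)^2 ≠ z k ^2) →
    (∀ k i, (z k + η/2)^2 ≠ x i ^2 ∧ (z k - η/2)^2 ≠ x i ^2) →
    AS η x (fFun η ξp ξm z)
      = (-1:ℂ)^M * (2*η)^(L - M) * poch ((ξp + ξm)/η) (L - M)
        * AS η z (fFun η (η/2 - ξp) (η/2 - ξm) x) := by
  induction N with
  | zero =>
    intro L M hLM hML η hη ξp ξm x z hx0 hz0 hx hz hxz hzx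
    have hL : L = 0 := by omega
    have hM : M = 0 := by omega
    subst hL; subst hM
    rw [AS_zero, AS_zero, poch_zero]
    norm_num
  | succ N ih =>
    intro L M hLM hML η hη ξp ξm x z hx0 hz0 hx hz hxz hzx
    rcases L with _ | n
    · have hM : M = 0 := by omega
      subst hM
      rw [AS_zero, AS_zero, poch_zero]
      norm_num
    · obtain ⟨P, hPdeg, hPev⟩ := exists_polyP η ξm x z
      obtain ⟨Q, hQdeg, hQev⟩ :=
        exists_polyQ η ξm x z ((n+1) - M) ((-1:ℂ)^M * (2*η)^((n+1) - M))
      set pf : Fin (n+1) × Bool → ℂ := fun p => if p.2 then x p.1 else -x p.1 with hpf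
      have hpfsq : ∀ p : Fin (n+1) × Bool, (pf p)^2 = x p.1 ^ 2 := by
        intro p
        rcases Bool.eq_false_or_eq_true p.2 with hb | hb <;>
          simp only [hpf, hb, if_true, Bool.false_eq_true, if_false] <;> ring
      have hinj : Function.Injective pf := by
        rintro ⟨i, b⟩ ⟨j, c⟩ h
        have hsq : x i ^ 2 = x j ^ 2 := by
          rw [← hpfsq (i, b), ← hpfsq (j, c), h]
        have hij : i = j := by
          by_contra hne
          exact hx i j hne hsq
        subst hij
        have hbc : b = c := by
          rcases Bool.eq_false_or_eq_true b with hb | hb <;>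
            rcases Bool.eq_false_or_eq_true c with hc | hc <;>
              simp only [hpf, hb, hc, if_true, Bool.false_eq_true, if_false] at h ⊢
          · exact absurd (by linear_combination h/2 : x i = 0) (hx0 i)
          · exact absurd (by linear_combination -h/2 : x i = 0) (hx0 i)
        rw [hbc]
      have heq : P = Q := by
        have hPQ : P - Q = 0 := by
          apply Polynomial.eq_zero_of_natDegree_lt_card_of_eval_eq_zero (P - Q) hinj
          · -- evaluation at all the points ±x i
            rintro ⟨i₀, b⟩
            rw [Polynomial.eval_sub, sub_eq_zero]
            set t₀ : ℂ := pf (i₀, b) with ht₀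
            set a : ℂ := -t₀ with hat
            have hta : t₀ = -a := by rw [hat, neg_neg]
            have hax : a ^ 2 = x i₀ ^ 2 := by
              rw [hat, neg_sq]; exact hpfsq (i₀, b)
            have ha0 : a ≠ 0 := by
              rw [hat, neg_ne_zero, ht₀]
              rcases Bool.eq_false_or_eq_true b with hb | hb <;>
                simp [hpf, hb, hx0 i₀]
            have hza : ∀ k, z k ^ 2 ≠ (a - η/2)^2 := by
              intro k
              rcases Bool.eq_false_or_eq_true b with hb | hb
              · have hax' : a = -x i₀ := by
                  rw [hat, ht₀]; simp [hpf, hb]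
                rw [hax', show (-x i₀ - η/2)^2 = (x i₀ + η/2)^2 from by ring]
                exact fun h => (hxz i₀ k).1 h.symm
              · have hax' : a = x i₀ := by
                  rw [hat, ht₀]; simp [hpf, hb]
                rw [hax']
                exact fun h => (hxz i₀ k).2 h.symm
            set x' : Fin n → ℂ := x ∘ i₀.succAbove with hx'def
            have hx0' : ∀ i, x' i ≠ 0 := fun i => hx0 _
            have hx' : ∀ i j, i ≠ j → x' i ^ 2 ≠ x' j ^ 2 := fun i j hij =>
              hx _ _ (fun h => hij (Fin.succAbove_right_injective h))
            have hxz' : ∀ i k, (x' i + η/2)^2 ≠ z k ^2 ∧ (x' i - η/2)^2 ≠ z k ^2 :=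
              fun i k => hxz _ k
            have hzx' : ∀ k i, (z k + η/2)^2 ≠ x' i ^2 ∧ (z k - η/2)^2 ≠ x' i ^2 :=
              fun k i => hzx k _
            have hP : P.eval t₀
                = (2 * (ξm - a) * ∏ m, ((x i₀ ^ 2 - z m ^ 2) / ((a - η/2) ^ 2 - z m ^ 2)))
                  * AS η x' (fFun η (η - a) ξm z) := by
              rw [hPev t₀, hta, key η ξm z x i₀ a hax ha0 (fun j hj => hx j i₀ hj)]
            have hQ : Q.eval t₀
                = ((-1:ℂ)^M * (2*η)^((n+1) - M)) * poch ((t₀ + ξm)/η) ((n+1) - M) *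
                    ((∏ m, ((x i₀ ^ 2 - z m ^ 2) / ((a - η/2) ^ 2 - z m ^ 2))) *
                      AS η z (fFun η (a - η/2) (η/2 - ξm) x')) := by
              rw [hQev t₀, show η/2 - t₀ = η/2 + a from by rw [hat]; ring,
                even_shift η ξm a x z i₀ hax hz0 hzx hza]
              have hprod : (∏ k, ((z k ^ 2 - x i₀ ^ 2)/(z k ^ 2 - (a - η/2)^2)))
                  = ∏ m, ((x i₀ ^ 2 - z m ^ 2) / ((a - η/2) ^ 2 - z m ^ 2)) := by
                refine Finset.prod_congr rfl fun k _ => ?_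
                rw [show z k ^ 2 - x i₀ ^ 2 = -(x i₀ ^ 2 - z k ^ 2) from by ring,
                  show z k ^ 2 - (a - η/2)^2 = -((a - η/2)^2 - z k ^ 2) from by ring,
                  neg_div_neg_eq]
              rw [hprod]
            have h2ηs : 2 * η * ((t₀ + ξm)/η) = 2 * (ξm - a) := by
              rw [hta]
              field_simp
              ring
            rcases Nat.lt_or_ge M (n+1) with hMn | hMn
            · -- case A : M ≤ n
              have hMn' : M ≤ n := by omega
              have hd : (n+1) - M = (n - M) + 1 := by omega
              have IH1 := ih n M (by omega) hMn' η hη (η - a) ξm x' z hx0' hz0 hx' hz hxz' hzx'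
              rw [show η/2 - (η - a) = a - η/2 from by ring] at IH1
              have hs1 : (η - a + ξm)/η = (t₀ + ξm)/η + 1 := by
                rw [hta]
                field_simp
                ring
              rw [hs1] at IH1
              rw [hP, hQ, IH1, hd, poch_succ ((t₀ + ξm)/η) (n - M)]
              set Pr := ∏ m, ((x i₀ ^ 2 - z m ^ 2) / ((a - η/2) ^ 2 - z m ^ 2)) with hPr
              clear_value Pr
              set W := AS η z (fFun η (a - η/2) (η/2 - ξm) x') with hW
              clear_value W
              set s₀ := (t₀ + ξm)/η with hs₀
              clear_value s₀
              set pc := poch (s₀ + 1) (n - M) with hpc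
              clear_value pc
              linear_combination (-((-1:ℂ)^M * (2*η)^(n - M) * pc * Pr * W)) * h2ηs
            · -- case B : M = n+1
              have hM : M = n + 1 := by omega
              subst hM
              have IH2 := ih (n+1) n (by omega) (by omega) η hη (a - η/2) (η/2 - ξm) z x'
                hz0 hx0' hz hx' (fun k i => hzx k _) (fun i k => hxz _ k)
              rw [show η/2 - (a - η/2) = η - a from by ring,
                show η/2 - (η/2 - ξm) = ξm from by ring,
                show (n+1) - n = 1 from by omega, poch_one] at IH2
              have hssum : ((a - η/2) + (η/2 - ξm))/η = -((t₀ + ξm)/η) := by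
                rw [hta]
                field_simp
                ring
              rw [hssum] at IH2
              rw [hP, hQ, IH2, show (n+1) - (n+1) = 0 from by omega, poch_zero]
              set Pr := ∏ m, ((x i₀ ^ 2 - z m ^ 2) / ((a - η/2) ^ 2 - z m ^ 2)) with hPr
              clear_value Pr
              set V := AS η x' (fFun η (η - a) ξm z) with hV
              clear_value V
              have hcc : ((-1:ℂ))^n * ((-1:ℂ))^n = 1 := by
                rw [← pow_add, show n + n = 2*n from by omega, pow_mul]
                norm_num
              have hpow : ((-1:ℂ))^(n+1) = -((-1:ℂ))^n := by
                rw [pow_succ]; ring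
              rw [hpow]
              set c := ((-1:ℂ))^n with hc
              clear_value c
              set s₀ := (t₀ + ξm)/η with hs₀
              clear_value s₀
              linear_combination (-(Pr * V)) * h2ηs - (2 * η * s₀ * Pr * V) * hcc
          · -- degree bound
            have h1 : (P - Q).natDegree ≤ n + 1 := by
              refine le_trans (Polynomial.natDegree_sub_le _ _) ?_
              exact max_le hPdeg (le_trans hQdeg (by omega))
            have h2 : Fintype.card (Fin (n+1) × Bool) = 2 * (n+1) := by
              simp [Fintype.card_prod]
              omega
            omega
        exact sub_eq_zero.mp hPQ
      have h1 := hPev ξp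
      have h2 := hQev ξp
      rw [heq] at h1
      rw [← h1, h2]

lemma Gamma_poch (s : ℂ) (hs : ∀ m : ℕ, s ≠ -(m:ℂ)) (d : ℕ) :
    Complex.Gamma (s + d) = poch s d * Complex.Gamma s := by
  induction d with
  | zero => simp [poch_zero]
  | succ d ihd =>
    have hne : s + (d:ℂ) ≠ 0 := by
      intro h
      exact hs d (by linear_combination h)
    have h1 : s + ((d+1 : ℕ):ℂ) = (s + d) + 1 := by push_cast; ring
    rw [h1, Complex.Gamma_add_one _ hne, ihd]
    unfold poch
    rw [Finset.prod_range_succ]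
    ring

lemma poch_ne_zero (s : ℂ) (hs : ∀ m : ℕ, s ≠ -(m:ℂ)) (d : ℕ) : poch s d ≠ 0 := by
  unfold poch
  rw [Finset.prod_ne_zero_iff]
  intro j _
  intro h
  exact hs j (by linear_combination h)

lemma poch_reflect (s : ℂ) : ∀ d : ℕ, poch (1 - s) d = (-1:ℂ)^d * poch (s - d) d := by
  intro d
  induction d with
  | zero => simp [poch_zero]
  | succ d ihd =>
    rw [show poch (1-s) (d+1) = poch (1-s) d * (1 - s + d) from by
        unfold poch; rw [Finset.prod_range_succ], ihd,
      poch_succ (s - ((d+1:ℕ):ℂ)) d,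
      show s - ((d+1:ℕ):ℂ) + 1 = s - d from by push_cast; ring]
    push_cast
    ring

end S14

theorem stmt14 (L M : ℕ) (η : ℂ) (hη : η ≠ 0) (ξp ξm : ℂ)
    (hs : ∀ m : ℕ, (ξp + ξm) / η ≠ -(m : ℂ))
    (hs' : ∀ m : ℕ, (ξp + ξm) / η + (L : ℂ) - (M : ℂ) ≠ -(m : ℂ))
    (x : Fin L → ℂ) (z : Fin M → ℂ)
    (hx0 : ∀ i, x i ≠ 0) (hz0 : ∀ k, z k ≠ 0)
    (hx : ∀ i j, i ≠ j → x i ^ 2 ≠ x j ^ 2)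
    (hz : ∀ i j, i ≠ j → z i ^ 2 ≠ z j ^ 2)
    (hxz : ∀ i k, (x i + η / 2) ^ 2 ≠ z k ^ 2 ∧ (x i - η / 2) ^ 2 ≠ z k ^ 2)
    (hzx : ∀ k i, (z k + η / 2) ^ 2 ≠ x i ^ 2 ∧ (z k - η / 2) ^ 2 ≠ x i ^ 2) :
    Afun η x (fFun η ξp ξm z)
      = (-1 : ℂ) ^ M * (2 * η) ^ ((L : ℤ) - (M : ℤ))
          * (Complex.Gamma ((ξp + ξm) / η + (L : ℂ) - (M : ℂ))
              / Complex.Gamma ((ξp + ξm) / η))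
          * Afun η z (fFun η (-ξp + η / 2) (-ξm + η / 2) x) := by
  classical
  rw [S14.Afun_eq_AS η x hx (fFun η ξp ξm z),
    S14.Afun_eq_AS η z hz (fFun η (-ξp + η / 2) (-ξm + η / 2) x),
    show -ξp + η/2 = η/2 - ξp from by ring, show -ξm + η/2 = η/2 - ξm from by ring]
  rcases le_or_gt M L with hML | hLM
  · -- case L ≥ M
    have hm := S14.master (L+M) L M le_rfl hML η hη ξp ξm x z hx0 hz0 hx hz hxz hzx
    rw [hm]
    set d := L - M with hd
    have hcast : (ξp+ξm)/η + (L:ℂ) - (M:ℂ) = (ξp+ξm)/η + (d:ℂ) := by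
      rw [hd, Nat.cast_sub hML]
      push_cast
      ring
    rw [hcast, S14.Gamma_poch _ hs d,
      show (L:ℤ) - (M:ℤ) = ((d:ℕ):ℤ) from by omega, zpow_natCast,
      mul_div_cancel_right₀ _ (Complex.Gamma_ne_zero hs)]
  · -- case L < M
    have hML' : L ≤ M := hLM.le
    have hm := S14.master (M+L) M L le_rfl hML' η hη (η/2 - ξp) (η/2 - ξm) z x
      hz0 hx0 hz hx hzx hxz
    rw [show η/2 - (η/2 - ξp) = ξp from by ring,
      show η/2 - (η/2 - ξm) = ξm from by ring] at hm
    have hshat : ((η/2 - ξp) + (η/2 - ξm))/η = 1 - (ξp+ξm)/η := by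
      field_simp
      ring
    rw [hshat] at hm
    rw [hm]
    set d := M - L with hd
    have hcast : (ξp+ξm)/η + (L:ℂ) - (M:ℂ) = (ξp+ξm)/η - (d:ℂ) := by
      rw [hd, Nat.cast_sub hML']
      push_cast
      ring
    have hσne : ∀ m : ℕ, (ξp+ξm)/η - (d:ℂ) ≠ -(m:ℂ) := by
      intro m h
      exact hs' m (by rw [hcast]; exact h)
    have hΓσ := Complex.Gamma_ne_zero hσne
    have hpne := S14.poch_ne_zero _ hσne d
    have hΓs : Complex.Gamma ((ξp+ξm)/η)
        = S14.poch ((ξp+ξm)/η - d) d * Complex.Gamma ((ξp+ξm)/η - d) := by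
      have h := S14.Gamma_poch ((ξp+ξm)/η - d) hσne d
      rw [show (ξp+ξm)/η - (d:ℂ) + (d:ℂ) = (ξp+ξm)/η from by ring] at h
      exact h
    rw [hcast, S14.poch_reflect ((ξp+ξm)/η) d, hΓs,
      show (L:ℤ) - (M:ℤ) = -((d:ℕ):ℤ) from by omega, zpow_neg, zpow_natCast]
    have h2η : ((2:ℂ)*η) ≠ 0 := by
      intro h
      rcases mul_eq_zero.mp h with h | h
      · norm_num at h
      · exact hη h
    have hpow : ((2:ℂ)*η)^d ≠ 0 := pow_ne_zero _ h2η
    have hsign : ((-1:ℂ))^M = (-1:ℂ)^L * (-1:ℂ)^d := by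
      rw [← pow_add, show L + d = M from by omega]
    rw [hsign]
    have hc1 : ((-1:ℂ))^L * ((-1:ℂ))^L = 1 := by
      rw [← pow_add, show L + L = 2*L from by omega, pow_mul]
      norm_num
    have hc2 : ((-1:ℂ))^d * ((-1:ℂ))^d = 1 := by
      rw [← pow_add, show d + d = 2*d from by omega, pow_mul]
      norm_num
    set G := Complex.Gamma ((ξp+ξm)/η - (d:ℂ)) with hG
    clear_value G
    set Pc := S14.poch ((ξp+ξm)/η - (d:ℂ)) d with hPc
    clear_value Pc
    set A := S14.AS η x (fFun η ξp ξm z) with hA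
    clear_value A
    set B := ((2:ℂ)*η)^d with hB
    clear_value B
    set c1 := ((-1:ℂ))^L with hc1d
    clear_value c1
    set c2 := ((-1:ℂ))^d with hc2d
    clear_value c2
    have h3 : G / (Pc * G) = Pc⁻¹ := by
      rw [div_eq_iff (mul_ne_zero hpne hΓσ)]
      field_simp
    rw [h3]
    field_simp [hpne, hpow]
    linear_combination (-(A * c2 * c2)) * hc1 + (-A) * hc2
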